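/- Let ρ ∈ (0,1), let Ḡ ∈ ℝ^{n×n} with operator norm ‖Ḡ‖_op ≤ ρ, let B̄ ∈ ℝ^{n×m}, and let c₀ > 0. Let (G_k)_{k∈ℕ} in ℝ^{n×n} and (B_k)_{k∈ℕ} in ℝ^{n×m} satisfy ‖G_k − Ḡ‖_op ≤ c₀ ρ^{k+1} and ‖B_k − B̄‖ ≤ c₀ ρ^{k+1} for all k ∈ ℕ. Define the recursion D_{k+1} = G_k D_k + B_k from any D_0 ∈ ℝ^{n×m}, and set D̄ = (I − Ḡ)^{-1} B̄ (the matrix I − Ḡ being invertible since ‖Ḡ‖_op < 1). Then for all k ∈ ℕ: ‖D_k − D̄‖ ≤ ρ^{k/2} · exp(c₀ √ρ (1 + ‖B̄‖)/(1−ρ)²) · (‖D_0‖ + ‖B̄‖/(1−ρ) + c₀ √ρ (1 + ‖B̄‖)/(1−√ρ)²). -/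

import Mathlib

open Matrix

/-- Frobenius norm of a real matrix. -/
noncomputable def frobNorm {n m : ℕ} (M : Matrix (Fin n) (Fin m) ℝ) : ℝ :=
  Real.sqrt (∑ i, ∑ j, (M i j) ^ 2)

/-- Operator norm (induced by the Euclidean norms) of a real matrix. -/
noncomputable def l2OpNorm {n m : ℕ} (M : Matrix (Fin n) (Fin m) ℝ) : ℝ :=
  ‖LinearMap.toContinuousLinearMap (Matrix.toEuclideanLin M)‖

open scoped Matrix.Norms.L2Operator

lemma frobNorm_eq {n m : ℕ} (M : Matrix (Fin n) (Fin m) ℝ) :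
    frobNorm M = ‖((WithLp.equiv 2 _).symm (fun p : Fin n × Fin m => M p.1 p.2) :
      EuclideanSpace ℝ (Fin n × Fin m))‖ := by
  rw [EuclideanSpace.norm_eq, frobNorm]
  congr 1
  rw [Fintype.sum_prod_type]
  simp [PiLp.toLp_apply, Real.norm_eq_abs, sq_abs]

lemma frobNorm_nonneg {n m : ℕ} (M : Matrix (Fin n) (Fin m) ℝ) : 0 ≤ frobNorm M :=
  Real.sqrt_nonneg _

lemma frobNorm_add_le {n m : ℕ} (A B : Matrix (Fin n) (Fin m) ℝ) :
    frobNorm (A + B) ≤ frobNorm A + frobNorm B := by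
  rw [frobNorm_eq, frobNorm_eq, frobNorm_eq]
  have : ((WithLp.equiv 2 _).symm (fun p : Fin n × Fin m => (A + B) p.1 p.2) :
      EuclideanSpace ℝ (Fin n × Fin m)) =
      (WithLp.equiv 2 _).symm (fun p : Fin n × Fin m => A p.1 p.2) +
      (WithLp.equiv 2 _).symm (fun p : Fin n × Fin m => B p.1 p.2) := rfl
  rw [this]
  exact norm_add_le _ _

lemma frobNorm_neg {n m : ℕ} (A : Matrix (Fin n) (Fin m) ℝ) :
    frobNorm (-A) = frobNorm A := by
  rw [frobNorm_eq, frobNorm_eq]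
  have : ((WithLp.equiv 2 _).symm (fun p : Fin n × Fin m => (-A) p.1 p.2) :
      EuclideanSpace ℝ (Fin n × Fin m)) =
      -((WithLp.equiv 2 _).symm (fun p : Fin n × Fin m => A p.1 p.2)) := rfl
  rw [this, norm_neg]

lemma frobNorm_mul_le {n k m : ℕ} (M : Matrix (Fin n) (Fin k) ℝ)
    (X : Matrix (Fin k) (Fin m) ℝ) :
    frobNorm (M * X) ≤ l2OpNorm M * frobNorm X := by
  have hC : (0:ℝ) ≤ l2OpNorm M := norm_nonneg _
  have key : ∀ j : Fin m, ∑ i, ((M * X) i j) ^ 2 ≤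
      (l2OpNorm M) ^ 2 * ∑ i, (X i j) ^ 2 := by
    intro j
    have h := Matrix.l2_opNorm_mulVec M
      ((WithLp.equiv 2 _).symm (fun i => X i j) : EuclideanSpace ℝ (Fin k))
    rw [EuclideanSpace.norm_eq, EuclideanSpace.norm_eq] at h
    have h1 : ∀ i, ‖((EuclideanSpace.equiv (Fin n) ℝ).symm
        (M *ᵥ ((WithLp.equiv 2 _).symm (fun i => X i j) : EuclideanSpace ℝ (Fin k)))) i‖ ^ 2
        = ((M * X) i j) ^ 2 := by
      intro i
      simp [Real.norm_eq_abs, sq_abs, Matrix.mulVec, Matrix.mul_apply, dotProduct,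
        PiLp.toLp_apply]
    have h2 : ∀ i, ‖((WithLp.equiv 2 _).symm (fun i => X i j) : EuclideanSpace ℝ (Fin k)) i‖ ^ 2
        = (X i j) ^ 2 := by
      intro i; simp [Real.norm_eq_abs, sq_abs, PiLp.toLp_apply]
    simp only [h1, h2] at h
    have hs1 : (0:ℝ) ≤ ∑ i, ((M * X) i j) ^ 2 := Finset.sum_nonneg fun i _ => sq_nonneg _
    have hs2 : (0:ℝ) ≤ ∑ i, (X i j) ^ 2 := Finset.sum_nonneg fun i _ => sq_nonneg _
    calc ∑ i, ((M * X) i j) ^ 2 = (Real.sqrt (∑ i, ((M * X) i j) ^ 2)) ^ 2 :=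
          (Real.sq_sqrt hs1).symm
      _ ≤ (‖M‖ * Real.sqrt (∑ i, (X i j) ^ 2)) ^ 2 := by
          apply pow_le_pow_left₀ (Real.sqrt_nonneg _) h
      _ = (l2OpNorm M) ^ 2 * ∑ i, (X i j) ^ 2 := by
          rw [mul_pow, Real.sq_sqrt hs2]; rfl
  have hswap : ∑ i, ∑ j, ((M * X) i j) ^ 2 = ∑ j, ∑ i, ((M * X) i j) ^ 2 :=
    Finset.sum_comm
  have hswap2 : ∑ i, ∑ j, ((X) i j) ^ 2 = ∑ j, ∑ i, ((X) i j) ^ 2 := Finset.sum_comm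
  rw [frobNorm, frobNorm, hswap, hswap2]
  calc Real.sqrt (∑ j, ∑ i, ((M * X) i j) ^ 2)
      ≤ Real.sqrt ((l2OpNorm M) ^ 2 * ∑ j, ∑ i, (X i j) ^ 2) := by
        apply Real.sqrt_le_sqrt
        rw [Finset.mul_sum]
        exact Finset.sum_le_sum fun j _ => key j
    _ = l2OpNorm M * Real.sqrt (∑ j, ∑ i, (X i j) ^ 2) := by
        rw [Real.sqrt_mul (sq_nonneg _), Real.sqrt_sq hC]

lemma geom_sum_le_inv_aux {r : ℝ} (h0 : 0 ≤ r) (h1 : r < 1) (k : ℕ) :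
    ∑ j ∈ Finset.range k, r ^ j ≤ 1 / (1 - r) := by
  have hpos : (0:ℝ) < 1 - r := by linarith
  rw [geom_sum_eq h1.ne k]
  have heq : (r ^ k - 1) / (r - 1) = (1 - r ^ k) / (1 - r) := by
    rw [div_eq_div_iff (by linarith) (by linarith)]; ring
  rw [heq]
  gcongr
  linarith [pow_nonneg h0 k]

/-- the key per-step arithmetic inequality -/
lemma step_arith_aux (s c₀ a q β M u : ℝ) (hs0 : 0 < s) (hs1 : s < 1) (hc₀ : 0 < c₀)
    (ha : 0 ≤ a) (hq : 1 ≤ q) (hβ : 0 ≤ β) (hM0 : 0 ≤ M) (hu : u ≤ a * (q * β)) :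
    (s * s + c₀ * ((a * s) * (a * s))) * u + c₀ * ((a * s) * (a * s)) * (1 + M) ≤
      (a * s) * ((q * (1 + c₀ * ((a * a) * s))) * (β + c₀ * (a * s) * (1 + M))) := by
  have hcoef : (0:ℝ) ≤ s * s + c₀ * ((a * s) * (a * s)) := by positivity
  have h1 : (s * s + c₀ * ((a * s) * (a * s))) * u ≤
      (s * s + c₀ * ((a * s) * (a * s))) * (a * (q * β)) :=
    mul_le_mul_of_nonneg_left hu hcoef
  have hdiff : (a * s) * ((q * (1 + c₀ * ((a * a) * s))) * (β + c₀ * (a * s) * (1 + M))) -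
      ((s * s + c₀ * ((a * s) * (a * s))) * (a * (q * β)) +
        c₀ * ((a * s) * (a * s)) * (1 + M)) =
      a * q * β * (s * (1 - s)) + c₀ * (a * a) * (s * s) * (1 + M) * (q - 1) +
        c₀ * c₀ * (a * a * a * a) * (s * s * s) * q * (1 + M) := by ring
  have hterm1 : 0 ≤ a * q * β * (s * (1 - s)) := by
    apply mul_nonneg (mul_nonneg (mul_nonneg ha (by linarith)) hβ)
    apply mul_nonneg hs0.le; linarith
  have hterm2 : 0 ≤ c₀ * (a * a) * (s * s) * (1 + M) * (q - 1) := by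
    apply mul_nonneg (by positivity); linarith
  have hterm3 : 0 ≤ c₀ * c₀ * (a * a * a * a) * (s * s * s) * q * (1 + M) := by
    apply mul_nonneg (mul_nonneg (by positivity) (by linarith)); linarith
  linarith

/-- Reduced perturbed convergence: for a contraction `Ḡ` with `‖Ḡ‖_op ≤ ρ < 1`,
perturbed iterations `D (k+1) = G k * D k + B k` with geometrically converging
`G k → Ḡ` and `B k → B̄` converge to `D̄ = (I - Ḡ)⁻¹ B̄` with rate `√ρ` and explicit
constants. -/
theorem reduced_perturbed_convergence
    (n m : ℕ) (hn : 0 < n) (hm : 0 < m)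
    (ρ c₀ : ℝ) (hρ : ρ ∈ Set.Ioo (0 : ℝ) 1) (hc₀ : 0 < c₀)
    (Gbar : Matrix (Fin n) (Fin n) ℝ) (hGbar : l2OpNorm Gbar ≤ ρ)
    (Bbar : Matrix (Fin n) (Fin m) ℝ)
    (G : ℕ → Matrix (Fin n) (Fin n) ℝ) (B : ℕ → Matrix (Fin n) (Fin m) ℝ)
    (hG : ∀ k, l2OpNorm (G k - Gbar) ≤ c₀ * ρ ^ (k + 1))
    (hB : ∀ k, frobNorm (B k - Bbar) ≤ c₀ * ρ ^ (k + 1))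
    (D : ℕ → Matrix (Fin n) (Fin m) ℝ)
    (hD : ∀ k, D (k + 1) = G k * D k + B k) :
    ∀ k : ℕ,
      frobNorm (D k - (1 - Gbar)⁻¹ * Bbar) ≤
        Real.sqrt ρ ^ k *
          Real.exp (c₀ * Real.sqrt ρ * (1 + frobNorm Bbar) / (1 - ρ) ^ 2) *
          (frobNorm (D 0) + frobNorm Bbar / (1 - ρ) +
            c₀ * Real.sqrt ρ * (1 + frobNorm Bbar) / (1 - Real.sqrt ρ) ^ 2) := by
  obtain ⟨hρ0, hρ1⟩ := hρ
  set s := Real.sqrt ρ with hs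
  have hs0 : 0 < s := Real.sqrt_pos.mpr hρ0
  have hs1 : s < 1 := by
    rw [hs, show (1:ℝ) = Real.sqrt 1 by simp]
    exact Real.sqrt_lt_sqrt hρ0.le hρ1
  have hss : s * s = ρ := Real.mul_self_sqrt hρ0.le
  set Dbar := (1 - Gbar)⁻¹ * Bbar with hDbar_def
  set F := frobNorm Bbar with hF
  have hF0 : 0 ≤ F := frobNorm_nonneg _
  -- invertibility of 1 - Gbar and the fixed-point equation
  haveI : CompleteSpace (Matrix (Fin n) (Fin n) ℝ) := FiniteDimensional.complete ℝ _
  have hGlt : ‖Gbar‖ < 1 := lt_of_le_of_lt hGbar hρ1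
  have hunit : IsUnit (1 - Gbar) := isUnit_one_sub_of_norm_lt_one hGlt
  have hdet : IsUnit (1 - Gbar).det := (Matrix.isUnit_iff_isUnit_det _).mp hunit
  have hfix : Dbar = Gbar * Dbar + Bbar := by
    have h1 : (1 - Gbar) * Dbar = Bbar := by
      rw [hDbar_def, ← Matrix.mul_assoc, Matrix.mul_nonsing_inv _ hdet, Matrix.one_mul]
    calc Dbar = Gbar * Dbar + (1 - Gbar) * Dbar := by rw [Matrix.sub_mul, Matrix.one_mul]; abel
      _ = Gbar * Dbar + Bbar := by rw [h1]
  set M := frobNorm Dbar with hMdef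
  have hM0 : 0 ≤ M := frobNorm_nonneg _
  have hM : M * (1 - ρ) ≤ F := by
    have h2 : M ≤ ρ * M + F := by
      calc M = frobNorm (Gbar * Dbar + Bbar) := by rw [hMdef, ← hfix]
        _ ≤ frobNorm (Gbar * Dbar) + F := frobNorm_add_le _ _
        _ ≤ l2OpNorm Gbar * M + F := by
            have := frobNorm_mul_le Gbar Dbar
            linarith
        _ ≤ ρ * M + F := by
            have := mul_le_mul_of_nonneg_right hGbar hM0
            linarith
    have hexp : M * (1 - ρ) = M - ρ * M := by ring
    linarith
  -- operator norm bound on G k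
  have hGk : ∀ k, l2OpNorm (G k) ≤ ρ + c₀ * ρ ^ (k + 1) := by
    intro k
    have htri : l2OpNorm (G k) ≤ l2OpNorm (G k - Gbar) + l2OpNorm Gbar := by
      show ‖G k‖ ≤ ‖G k - Gbar‖ + ‖Gbar‖
      simpa using norm_add_le (G k - Gbar) Gbar
    linarith [hG k]
  -- one-step recursion estimate
  have hrec : ∀ k, frobNorm (D (k + 1) - Dbar) ≤
      (ρ + c₀ * ρ ^ (k + 1)) * frobNorm (D k - Dbar) + c₀ * ρ ^ (k + 1) * (1 + M) := by
    intro k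
    have hexp : D (k + 1) - Dbar =
        G k * (D k - Dbar) + ((G k - Gbar) * Dbar + (B k - Bbar)) := by
      rw [hD k]
      conv_lhs => rw [hfix]
      rw [Matrix.mul_sub, Matrix.sub_mul]
      abel
    have h1 : frobNorm (D (k + 1) - Dbar) ≤
        frobNorm (G k * (D k - Dbar)) + (frobNorm ((G k - Gbar) * Dbar) +
          frobNorm (B k - Bbar)) := by
      rw [hexp]
      calc frobNorm (G k * (D k - Dbar) + ((G k - Gbar) * Dbar + (B k - Bbar)))
          ≤ frobNorm (G k * (D k - Dbar)) + frobNorm ((G k - Gbar) * Dbar + (B k - Bbar)) :=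
            frobNorm_add_le _ _
        _ ≤ _ := by linarith [frobNorm_add_le ((G k - Gbar) * Dbar) (B k - Bbar)]
    have h2 := frobNorm_mul_le (G k) (D k - Dbar)
    have h3 := frobNorm_mul_le (G k - Gbar) Dbar
    have h4 := hB k
    have h5 := hG k
    have h6 := hGk k
    have hu0 : 0 ≤ frobNorm (D k - Dbar) := frobNorm_nonneg _
    have hring : c₀ * ρ ^ (k + 1) * (1 + M) = c₀ * ρ ^ (k + 1) + c₀ * ρ ^ (k + 1) * M := by
      ring
    linarith [mul_le_mul_of_nonneg_right h6 hu0, mul_le_mul_of_nonneg_right h5 hM0]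
  -- positivity facts about the product and the sum
  have hp1 : ∀ k, 1 ≤ ∏ j ∈ Finset.range k, (1 + c₀ * s ^ (2 * j + 1)) := by
    intro k
    calc (1:ℝ) = ∏ _j ∈ Finset.range k, (1:ℝ) := by simp
      _ ≤ ∏ j ∈ Finset.range k, (1 + c₀ * s ^ (2 * j + 1)) := by
          apply Finset.prod_le_prod (fun j _ => zero_le_one)
          intro j _
          have h : (0:ℝ) ≤ c₀ * s ^ (2 * j + 1) := by positivity
          linarith
  have hb0 : ∀ k, 0 ≤ frobNorm (D 0 - Dbar) +
      ∑ j ∈ Finset.range k, c₀ * s ^ (j + 1) * (1 + M) := by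
    intro k
    have h1 : (0:ℝ) ≤ ∑ j ∈ Finset.range k, c₀ * s ^ (j + 1) * (1 + M) :=
      Finset.sum_nonneg fun j _ => by positivity
    linarith [frobNorm_nonneg (D 0 - Dbar)]
  -- main induction
  have key : ∀ k, frobNorm (D k - Dbar) ≤
      s ^ k * ((∏ j ∈ Finset.range k, (1 + c₀ * s ^ (2 * j + 1))) *
        (frobNorm (D 0 - Dbar) + ∑ j ∈ Finset.range k, c₀ * s ^ (j + 1) * (1 + M))) := by
    intro k
    induction k with
    | zero => simp
    | succ k ih =>
      have hpow : (s * s) ^ (k + 1) = (s ^ k * s) * (s ^ k * s) := by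
        rw [mul_pow, pow_succ]
      have hs2k : s ^ (2 * k + 1) = (s ^ k * s ^ k) * s := by
        rw [pow_succ, mul_comm 2 k, pow_mul, sq]
      calc frobNorm (D (k + 1) - Dbar)
          ≤ (ρ + c₀ * ρ ^ (k + 1)) * frobNorm (D k - Dbar) + c₀ * ρ ^ (k + 1) * (1 + M) :=
            hrec k
        _ = (s * s + c₀ * ((s ^ k * s) * (s ^ k * s))) * frobNorm (D k - Dbar) +
            c₀ * ((s ^ k * s) * (s ^ k * s)) * (1 + M) := by
            rw [← hss, hpow]
        _ ≤ (s ^ k * s) * (((∏ j ∈ Finset.range k, (1 + c₀ * s ^ (2 * j + 1))) *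
              (1 + c₀ * ((s ^ k * s ^ k) * s))) *
            ((frobNorm (D 0 - Dbar) + ∑ j ∈ Finset.range k, c₀ * s ^ (j + 1) * (1 + M)) +
              c₀ * (s ^ k * s) * (1 + M))) := by
            exact step_arith_aux s c₀ (s ^ k) _ _ M _ hs0 hs1 hc₀ (pow_nonneg hs0.le k)
              (hp1 k) (hb0 k) hM0 ih
        _ = s ^ (k + 1) * ((∏ j ∈ Finset.range (k + 1), (1 + c₀ * s ^ (2 * j + 1))) *
            (frobNorm (D 0 - Dbar) + ∑ j ∈ Finset.range (k + 1),
              c₀ * s ^ (j + 1) * (1 + M))) := by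
            rw [Finset.prod_range_succ, Finset.sum_range_succ, hs2k, pow_succ]
            ring
  -- bound the product by the exponential
  have hprod : ∀ k, (∏ j ∈ Finset.range k, (1 + c₀ * s ^ (2 * j + 1))) ≤
      Real.exp (c₀ * s * (1 + F) / (1 - ρ) ^ 2) := by
    intro k
    have step1 : (∏ j ∈ Finset.range k, (1 + c₀ * s ^ (2 * j + 1))) ≤
        Real.exp (∑ j ∈ Finset.range k, c₀ * s ^ (2 * j + 1)) := by
      rw [Real.exp_sum]
      apply Finset.prod_le_prod
      · intro j _
        have h : (0:ℝ) ≤ c₀ * s ^ (2 * j + 1) := by positivity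
        linarith
      · intro j _
        have := Real.add_one_le_exp (c₀ * s ^ (2 * j + 1))
        linarith
    have step2 : (∑ j ∈ Finset.range k, c₀ * s ^ (2 * j + 1)) ≤
        c₀ * s * (1 + F) / (1 - ρ) ^ 2 := by
      have heq : ∀ j ∈ Finset.range k, c₀ * s ^ (2 * j + 1) = (c₀ * s) * ((s * s) ^ j) := by
        intro j _
        rw [pow_succ, mul_comm 2 j, pow_mul, sq]
        ring
      rw [Finset.sum_congr rfl heq, ← Finset.mul_sum]
      have hgeo := geom_sum_le_inv_aux (by positivity : (0:ℝ) ≤ s * s)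
        (by rw [hss]; exact hρ1) k
      have h1 : (c₀ * s) * (∑ j ∈ Finset.range k, (s * s) ^ j) ≤
          (c₀ * s) * (1 / (1 - ρ)) := by
        rw [← hss]
        exact mul_le_mul_of_nonneg_left hgeo (by positivity)
      have h2 : (c₀ * s) * (1 / (1 - ρ)) ≤ c₀ * s * (1 + F) / (1 - ρ) ^ 2 := by
        rw [mul_one_div, div_le_div_iff₀ (by linarith) (by nlinarith : (0:ℝ) < (1 - ρ) ^ 2)]
        have hdiff : c₀ * s * (1 + F) * (1 - ρ) - c₀ * s * (1 - ρ) ^ 2 =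
            c₀ * s * (1 - ρ) * (F + ρ) := by ring
        have hnn : 0 ≤ c₀ * s * (1 - ρ) * (F + ρ) :=
          mul_nonneg (mul_nonneg (mul_nonneg hc₀.le hs0.le) (by linarith)) (by linarith)
        linarith
      linarith
    calc (∏ j ∈ Finset.range k, (1 + c₀ * s ^ (2 * j + 1)))
        ≤ Real.exp (∑ j ∈ Finset.range k, c₀ * s ^ (2 * j + 1)) := step1
      _ ≤ Real.exp (c₀ * s * (1 + F) / (1 - ρ) ^ 2) := Real.exp_le_exp.mpr step2
  -- bound the additive part
  have hsum : ∀ k, frobNorm (D 0 - Dbar) + ∑ j ∈ Finset.range k, c₀ * s ^ (j + 1) * (1 + M) ≤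
      frobNorm (D 0) + F / (1 - ρ) + c₀ * s * (1 + F) / (1 - s) ^ 2 := by
    intro k
    have hE0 : frobNorm (D 0 - Dbar) ≤ frobNorm (D 0) + M := by
      have h := frobNorm_add_le (D 0) (-Dbar)
      rw [frobNorm_neg] at h
      rw [sub_eq_add_neg]
      linarith
    have hMF : M ≤ F / (1 - ρ) := by
      rw [le_div_iff₀ (by linarith)]
      linarith
    have hsum1 : (∑ j ∈ Finset.range k, c₀ * s ^ (j + 1) * (1 + M)) ≤
        (c₀ * s * (1 + M)) * (1 / (1 - s)) := by
      have heq : ∀ j ∈ Finset.range k, c₀ * s ^ (j + 1) * (1 + M) =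
          (c₀ * s * (1 + M)) * s ^ j := by
        intro j _; rw [pow_succ]; ring
      rw [Finset.sum_congr rfl heq, ← Finset.mul_sum]
      exact mul_le_mul_of_nonneg_left (geom_sum_le_inv_aux hs0.le hs1 k) (by positivity)
    have hMs : M * (1 - s) ≤ F := by
      have h1 : M * (1 - s * s) ≤ F := by rw [hss]; exact hM
      nlinarith [mul_nonneg hM0 (mul_nonneg hs0.le (by linarith : (0:ℝ) ≤ 1 - s))]
    have h2 : (c₀ * s * (1 + M)) * (1 / (1 - s)) ≤ c₀ * s * (1 + F) / (1 - s) ^ 2 := by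
      rw [mul_one_div, div_le_div_iff₀ (by linarith) (by nlinarith : (0:ℝ) < (1 - s) ^ 2)]
      have hbr : 0 ≤ F + s - M * (1 - s) := by linarith
      have hdiff : c₀ * s * (1 + F) * (1 - s) - c₀ * s * (1 + M) * (1 - s) ^ 2 =
          c₀ * s * (1 - s) * (F + s - M * (1 - s)) := by ring
      have hnn : 0 ≤ c₀ * s * (1 - s) * (F + s - M * (1 - s)) :=
        mul_nonneg (mul_nonneg (mul_nonneg hc₀.le hs0.le) (by linarith)) hbr
      linarith
    linarith
  -- conclude
  intro k
  calc frobNorm (D k - Dbar) ≤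
      s ^ k * ((∏ j ∈ Finset.range k, (1 + c₀ * s ^ (2 * j + 1))) *
        (frobNorm (D 0 - Dbar) + ∑ j ∈ Finset.range k, c₀ * s ^ (j + 1) * (1 + M))) := key k
    _ ≤ s ^ k * (Real.exp (c₀ * s * (1 + F) / (1 - ρ) ^ 2) *
        (frobNorm (D 0) + F / (1 - ρ) + c₀ * s * (1 + F) / (1 - s) ^ 2)) := by
        apply mul_le_mul_of_nonneg_left _ (pow_nonneg hs0.le k)
        exact mul_le_mul (hprod k) (hsum k) (hb0 k) (Real.exp_pos _).le
    _ = s ^ k * Real.exp (c₀ * s * (1 + F) / (1 - ρ) ^ 2) *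
        (frobNorm (D 0) + F / (1 - ρ) + c₀ * s * (1 + F) / (1 - s) ^ 2) := by ring
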